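/- There is no connected chordal graph G with γ_t(G) = 4 and γ_gr^t(G) = 4. -/

import Mathlib

/-- `S` is a total dominating set of `G`: every vertex has a neighbor in `S`. -/
def IsTotalDomSet {V : Type*} (G : SimpleGraph V) (S : Set V) : Prop :=
  ∀ v : V, ∃ u ∈ S, G.Adj v u

/-- `l` is a legal sequence of `G`: the vertices are distinct and every vertex
(except possibly the first) totally dominates a vertex not totally dominated
by the previous vertices. -/
def IsLegalSeq {V : Type*} (G : SimpleGraph V) (l : List V) : Prop :=
  l.Nodup ∧ ∀ i : Fin l.length, 0 < (i : ℕ) →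
    ∃ w : V, G.Adj (l.get i) w ∧ ∀ j : Fin l.length, (j : ℕ) < (i : ℕ) → ¬ G.Adj (l.get j) w

/-- `l` is a total dominating sequence of `G`. -/
def IsTotalDomSeq {V : Type*} (G : SimpleGraph V) (l : List V) : Prop :=
  IsLegalSeq G l ∧ IsTotalDomSet G {v | v ∈ l}

/-- The Grundy total domination number of `G`: the maximum length of a total
dominating sequence. -/
noncomputable def grundyTotalDomNum {V : Type*} (G : SimpleGraph V) : ℕ :=
  sSup {k : ℕ | ∃ l : List V, IsTotalDomSeq G l ∧ l.length = k}

/-- The total domination number of `G`: the minimum cardinality of a total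
dominating set. -/
noncomputable def totalDomNum {V : Type*} (G : SimpleGraph V) : ℕ :=
  sInf {k : ℕ | ∃ S : Set V, IsTotalDomSet G S ∧ S.ncard = k}

/-- `A`, `B` is a bipartition of `G`. -/
def IsBipartitionOf {V : Type*} (G : SimpleGraph V) (A B : Set V) : Prop :=
  (∀ v : V, (v ∈ A ∧ v ∉ B) ∨ (v ∈ B ∧ v ∉ A)) ∧
  ∀ ⦃u v : V⦄, G.Adj u v → (u ∈ A ∧ v ∈ B) ∨ (u ∈ B ∧ v ∈ A)

/-- `G` has no false twins: distinct vertices have distinct open neighborhoods. -/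
def FalseTwinFree {V : Type*} (G : SimpleGraph V) : Prop :=
  ∀ u v : V, u ≠ v → G.neighborSet u ≠ G.neighborSet v

/-- `G` has no isolated vertices. -/
def NoIsolatedVerts {V : Type*} (G : SimpleGraph V) : Prop :=
  ∀ v : V, ∃ u : V, G.Adj v u

/-- A graph is chordal if it contains no induced cycle of length greater than 3. -/
def Chordal {V : Type*} (G : SimpleGraph V) : Prop :=
  ∀ n : ℕ, 4 ≤ n → IsEmpty (SimpleGraph.cycleGraph n ↪g G)


namespace Work

variable {V : Type} {G : SimpleGraph V}

/-- Reversed-order legality predicate: head is the *last* vertex of the sequence. -/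
def QSeq (G : SimpleGraph V) : List V → Prop
  | [] => True
  | u :: l => QSeq G l ∧ (l = [] ∨ ∃ w, G.Adj u w ∧ ∀ x ∈ l, ¬ G.Adj x w)

lemma legal_concat (m : List V) (hm : IsLegalSeq G m) (u : V) (hu : u ∉ m) (w : V)
    (hw : G.Adj u w) (hwall : ∀ x ∈ m, ¬ G.Adj x w) : IsLegalSeq G (m ++ [u]) := by
  constructor
  · simp only [List.nodup_append, List.nodup_cons, List.not_mem_nil, not_false_iff,
      List.nodup_nil, and_true, true_and]
    refine ⟨hm.1, ?_⟩
    intro a ha b hb h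
    rw [List.mem_singleton] at hb
    subst hb; subst h
    exact hu ha
  · intro i hi
    have hilt : (i : ℕ) < m.length + 1 := by
      have := i.isLt; simpa using this
    rcases Nat.lt_or_ge (i : ℕ) m.length with hlt | hge
    · obtain ⟨w', hw'1, hw'2⟩ := hm.2 ⟨(i : ℕ), hlt⟩ hi
      refine ⟨w', ?_, ?_⟩
      · simpa [List.get_eq_getElem, List.getElem_append_left hlt] using hw'1
      · intro j hj
        have hjlt : (j : ℕ) < m.length := lt_trans hj hlt
        have : (m ++ [u]).get j = m.get ⟨(j : ℕ), hjlt⟩ := by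
          simp [List.get_eq_getElem, List.getElem_append_left hjlt]
        rw [this]
        exact hw'2 ⟨(j : ℕ), hjlt⟩ hj
    · have hieq : (i : ℕ) = m.length := le_antisymm (by omega) hge
      have hgu : (m ++ [u]).get i = u := by
        simp [List.get_eq_getElem, List.getElem_concat_length hieq]
      refine ⟨w, by rw [hgu]; exact hw, ?_⟩
      intro j hj
      have hjlt : (j : ℕ) < m.length := by omega
      have : (m ++ [u]).get j = m.get ⟨(j : ℕ), hjlt⟩ := by
        simp [List.get_eq_getElem, List.getElem_append_left hjlt]
      rw [this]
      exact hwall _ (List.get_mem m _)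

lemma isLegalSeq_reverse (l : List V) (hnd : l.Nodup) (hq : QSeq G l) :
    IsLegalSeq G l.reverse := by
  induction l with
  | nil => exact ⟨List.nodup_nil, fun i _ => i.elim0⟩
  | cons u l ih =>
    obtain ⟨hul, hl⟩ := List.nodup_cons.1 hnd
    obtain ⟨hql, hw⟩ := hq
    rw [List.reverse_cons]
    rcases hw with rfl | ⟨w, hw1, hw2⟩
    · refine ⟨by simp, fun i hi => ?_⟩
      have h1 : (i : ℕ) < 1 := by simpa using i.isLt
      omega
    · exact legal_concat l.reverse (ih hl hql) u (by simpa using hul) w hw1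
        (fun x hx => hw2 x (by simpa using hx))

lemma exists_ext [Fintype V] (hNoIso : ∀ v : V, ∃ u, G.Adj v u) :
    ∀ (n : ℕ) (l : List V), Fintype.card V - l.length ≤ n → l.Nodup → QSeq G l →
    ∃ m : List V, m.Nodup ∧ QSeq G m ∧ (∀ v : V, ∃ u ∈ m, G.Adj v u) ∧ l.length ≤ m.length := by
  intro n
  induction n with
  | zero =>
    intro l hle hnd hq
    by_cases hdom : ∀ v : V, ∃ u ∈ l, G.Adj v u
    · exact ⟨l, hnd, hq, hdom, le_rfl⟩
    · exfalso
      push_neg at hdom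
      obtain ⟨z, hz⟩ := hdom
      obtain ⟨w0, hw0⟩ := hNoIso z
      have hw0l : w0 ∉ l := fun hmem => hz w0 hmem hw0
      have hndm : (w0 :: l).Nodup := List.nodup_cons.2 ⟨hw0l, hnd⟩
      have := hndm.length_le_card
      simp only [List.length_cons] at this
      omega
  | succ n ih =>
    intro l hle hnd hq
    by_cases hdom : ∀ v : V, ∃ u ∈ l, G.Adj v u
    · exact ⟨l, hnd, hq, hdom, le_rfl⟩
    · push_neg at hdom
      obtain ⟨z, hz⟩ := hdom
      obtain ⟨w0, hw0⟩ := hNoIso z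
      have hw0l : w0 ∉ l := fun hmem => hz w0 hmem hw0
      have hndm : (w0 :: l).Nodup := List.nodup_cons.2 ⟨hw0l, hnd⟩
      have hqm : QSeq G (w0 :: l) :=
        ⟨hq, Or.inr ⟨z, hw0.symm, fun x hx h => hz x hx h.symm⟩⟩
      obtain ⟨m, h1, h2, h3, h4⟩ := ih (w0 :: l) (by simp only [List.length_cons]; omega) hndm hqm
      exact ⟨m, h1, h2, h3, by simp only [List.length_cons] at h4; omega⟩

lemma no_q5 [Fintype V] (hNoIso : ∀ v : V, ∃ u, G.Adj v u)
    (hle4 : ∀ l' : List V, IsTotalDomSeq G l' → l'.length ≤ 4)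
    (l : List V) (hnd : l.Nodup) (hq : QSeq G l) : l.length ≤ 4 := by
  obtain ⟨m, h1, h2, h3, h4⟩ := exists_ext hNoIso (Fintype.card V - l.length) l le_rfl hnd hq
  have htds : IsTotalDomSeq G m.reverse := by
    refine ⟨isLegalSeq_reverse m h1 h2, fun v => ?_⟩
    obtain ⟨u, hu1, hu2⟩ := h3 v
    exact ⟨u, by simpa using hu1, hu2⟩
  have := hle4 m.reverse htds
  simp only [List.length_reverse] at this
  omega


structure Base (G : SimpleGraph V) : Prop where
  c2 : ∀ a b c : V, ∃ z : V, ¬ G.Adj z a ∧ ¬ G.Adj z b ∧ ¬ G.Adj z c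
  cov4 : ∀ a b c d : V, a ≠ b → a ≠ c → a ≠ d → b ≠ c → b ≠ d → c ≠ d →
    (∃ w, G.Adj b w ∧ ¬ G.Adj a w) →
    (∃ w, G.Adj c w ∧ ¬ G.Adj a w ∧ ¬ G.Adj b w) →
    (∃ w, G.Adj d w ∧ ¬ G.Adj a w ∧ ¬ G.Adj b w ∧ ¬ G.Adj c w) →
    ∀ u : V, G.Adj u a ∨ G.Adj u b ∨ G.Adj u c ∨ G.Adj u d
  reach : ∀ u w : V, G.Reachable u w
  noC4 : ∀ a b c d : V, a ≠ b → a ≠ c → a ≠ d → b ≠ c → b ≠ d → c ≠ d →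
    G.Adj a b → G.Adj b c → G.Adj c d → G.Adj d a → ¬ G.Adj a c → ¬ G.Adj b d → False
  noC5 : ∀ a b c d e : V, a ≠ b → a ≠ c → a ≠ d → a ≠ e → b ≠ c → b ≠ d → b ≠ e →
    c ≠ d → c ≠ e → d ≠ e →
    G.Adj a b → G.Adj b c → G.Adj c d → G.Adj d e → G.Adj e a →
    ¬ G.Adj a c → ¬ G.Adj a d → ¬ G.Adj b d → ¬ G.Adj b e → ¬ G.Adj c e → False
  noC6 : ∀ a b c d e f : V, a ≠ b → a ≠ c → a ≠ d → a ≠ e → a ≠ f → b ≠ c → b ≠ d →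
    b ≠ e → b ≠ f → c ≠ d → c ≠ e → c ≠ f → d ≠ e → d ≠ f → e ≠ f →
    G.Adj a b → G.Adj b c → G.Adj c d → G.Adj d e → G.Adj e f → G.Adj f a →
    ¬ G.Adj a c → ¬ G.Adj a d → ¬ G.Adj a e → ¬ G.Adj b d → ¬ G.Adj b e → ¬ G.Adj b f →
    ¬ G.Adj c e → ¬ G.Adj c f → ¬ G.Adj d f → False

lemma nsymm {a b : V} (h : ¬ G.Adj a b) : ¬ G.Adj b a := fun h' => h h'.symm

lemma neAN {u v w : V} (h : G.Adj u w) (h' : ¬ G.Adj v w) : u ≠ v :=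
  fun he => h' (he ▸ h)

lemma neNA {u v w : V} (h : ¬ G.Adj u w) (h' : G.Adj v w) : u ≠ v :=
  fun he => h (he ▸ h')

lemma Base.kill (B : Base G) {a b c d u : V}
    (h1 : a ≠ b) (h2 : a ≠ c) (h3 : a ≠ d) (h4 : b ≠ c) (h5 : b ≠ d) (h6 : c ≠ d)
    (w2 : ∃ w, G.Adj b w ∧ ¬ G.Adj a w)
    (w3 : ∃ w, G.Adj c w ∧ ¬ G.Adj a w ∧ ¬ G.Adj b w)
    (w4 : ∃ w, G.Adj d w ∧ ¬ G.Adj a w ∧ ¬ G.Adj b w ∧ ¬ G.Adj c w)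
    (n1 : ¬ G.Adj u a) (n2 : ¬ G.Adj u b) (n3 : ¬ G.Adj u c) (n4 : ¬ G.Adj u d) : False := by
  rcases B.cov4 a b c d h1 h2 h3 h4 h5 h6 w2 w3 w4 u with h | h | h | h
  exacts [n1 h, n2 h, n3 h, n4 h]

section Match

/-- Case I.A.2 : `x ~ b`, `x ≁ d`; `q ~ a` only, `q ≁ b,c,d,x`. -/
lemma match_IA2 (B : Base G) (a b c d : V)
    (dab : a ≠ b) (dac : a ≠ c) (dad : a ≠ d) (dbc : b ≠ c) (dbd : b ≠ d) (dcd : c ≠ d)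
    (hab : G.Adj a b) (hcd : G.Adj c d)
    (nac : ¬ G.Adj a c) (nad : ¬ G.Adj a d) (nbc : ¬ G.Adj b c) (nbd : ¬ G.Adj b d)
    (x q : V)
    (xb : G.Adj x b) (xd : ¬ G.Adj x d)
    (qb : ¬ G.Adj q b) (qx : ¬ G.Adj q x) (qc : ¬ G.Adj q c)
    (qa : G.Adj q a) (qd : ¬ G.Adj q d) : False := by
  -- legal sequence (q, d, b, a) fails to cover d
  refine B.kill (a := q) (b := d) (c := b) (d := a) (u := d)
    (neAN qa (nsymm nad)) (neNA qx xb.symm) qa.ne (dbd.symm) (dad.symm) (dab.symm)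
    ⟨c, hcd.symm, qc⟩ ⟨x, xb.symm, qx, nsymm xd⟩ ⟨b, hab, qb, nsymm nbd, G.irrefl⟩
    (nsymm qd) G.irrefl (nsymm nbd) (nsymm nad)

/-- Case I.A : `x ~ b, x ~ c`, `x ≁ a, x ≁ d`. -/
lemma match_IA (B : Base G) (a b c d : V)
    (dab : a ≠ b) (dac : a ≠ c) (dad : a ≠ d) (dbc : b ≠ c) (dbd : b ≠ d) (dcd : c ≠ d)
    (hab : G.Adj a b) (hcd : G.Adj c d)
    (nac : ¬ G.Adj a c) (nad : ¬ G.Adj a d) (nbc : ¬ G.Adj b c) (nbd : ¬ G.Adj b d)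
    (cov : ∀ z : V, G.Adj z a ∨ G.Adj z b ∨ G.Adj z c ∨ G.Adj z d)
    (x : V) (xb : G.Adj x b) (xc : G.Adj x c) (xa : ¬ G.Adj x a) (xd : ¬ G.Adj x d) :
    False := by
  obtain ⟨q, qb, qx, qc⟩ := B.c2 b x c
  by_cases hqa : G.Adj q a
  · by_cases hqd : G.Adj q d
    · -- induced C6 : a b x c d q
      exact B.noC6 a b x c d q
        dab (neAN xc nac).symm dac dad hqa.ne.symm
        (neAN xc nbc).symm dbc dbd (neAN xb.symm qx)
        xc.ne (neAN xb (nsymm nbd)) (neAN xc qc)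
        dcd (neAN xc.symm qx) (neAN hcd.symm qc)
        hab xb.symm xc hcd hqd.symm hqa
        (nsymm xa) nac nad nbc nbd (nsymm qb) xd (nsymm qx) (nsymm qc)
    · exact match_IA2 B a b c d dab dac dad dbc dbd dcd hab hcd nac nad nbc nbd x q xb xd qb qx qc hqa hqd
  · by_cases hqd : G.Adj q d
    · exact match_IA2 B d c b a dcd.symm dbd.symm dad.symm dbc.symm dac.symm dab.symm
        hcd.symm hab.symm (nsymm nbd) (nsymm nad) (nsymm nbc) (nsymm nac)
        x q xc xa qc qx qb hqd hqa
    · rcases cov q with h | h | h | h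
      exacts [hqa h, qb h, qc h, hqd h]

/-- Case I.B : `x ~ a, b, c`, `x ≁ d`. -/
lemma match_IB (B : Base G) (a b c d : V)
    (dab : a ≠ b) (dac : a ≠ c) (dad : a ≠ d) (dbc : b ≠ c) (dbd : b ≠ d) (dcd : c ≠ d)
    (hab : G.Adj a b) (hcd : G.Adj c d)
    (nac : ¬ G.Adj a c) (nad : ¬ G.Adj a d) (nbc : ¬ G.Adj b c) (nbd : ¬ G.Adj b d)
    (cov : ∀ z : V, G.Adj z a ∨ G.Adj z b ∨ G.Adj z c ∨ G.Adj z d)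
    (x : V) (xa : G.Adj x a) (xb : G.Adj x b) (xc : G.Adj x c) (xd : ¬ G.Adj x d) :
    False := by
  obtain ⟨q, qb, qx, qc⟩ := B.c2 b x c
  by_cases hqa : G.Adj q a
  · by_cases hqd : G.Adj q d
    · -- induced C5 : a x c d q
      exact B.noC5 a x c d q
        xa.ne.symm dac dad hqa.ne.symm
        xc.ne (neAN xb (nsymm nbd)) (neAN xc qc)
        dcd (neAN xc.symm qx) hqd.ne.symm
        xa.symm xc hcd hqd.symm hqa
        nac nad xd (nsymm qx) (nsymm qc)
    · exact match_IA2 B a b c d dab dac dad dbc dbd dcd hab hcd nac nad nbc nbd x q xb xd qb qx qc hqa hqd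
  · by_cases hqd : G.Adj q d
    · -- I.B.3
      obtain ⟨z, zq, zd, zc⟩ := B.c2 q d c
      by_cases hzb : G.Adj z b
      · exact B.kill (a := q) (b := d) (c := c) (d := b) (u := b)
          hqd.ne (neNA qx xc.symm) (neNA qx xb.symm) dcd.symm dbd.symm dbc.symm
          ⟨c, hcd.symm, qc⟩ ⟨x, xc.symm, qx, nsymm xd⟩ ⟨z, hzb.symm, nsymm zq, nsymm zd, nsymm zc⟩
          (nsymm qb) nbd nbc G.irrefl
      · by_cases hza : G.Adj z a
        · exact B.kill (a := q) (b := d) (c := c) (d := a) (u := a)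
            hqd.ne (neNA qx xc.symm) (neNA qb hab) dcd.symm dad.symm dac.symm
            ⟨c, hcd.symm, qc⟩ ⟨x, xc.symm, qx, nsymm xd⟩ ⟨z, hza.symm, nsymm zq, nsymm zd, nsymm zc⟩
            (nsymm hqa) nad nac G.irrefl
        · rcases cov z with h | h | h | h
          exacts [hza h, hzb h, zc h, zd h]
    · rcases cov q with h | h | h | h
      exacts [hqa h, qb h, qc h, hqd h]

/-- Case I.D2 : `x ~ a,b,c,d`; `q ≁ a, c, x`, `q ~ b`. -/
lemma match_ID2 (B : Base G) (a b c d : V)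
    (dab : a ≠ b) (dac : a ≠ c) (dad : a ≠ d) (dbc : b ≠ c) (dbd : b ≠ d) (dcd : c ≠ d)
    (hab : G.Adj a b) (hcd : G.Adj c d)
    (nac : ¬ G.Adj a c) (nad : ¬ G.Adj a d) (nbc : ¬ G.Adj b c) (nbd : ¬ G.Adj b d)
    (cov : ∀ z : V, G.Adj z a ∨ G.Adj z b ∨ G.Adj z c ∨ G.Adj z d)
    (x q : V) (xa : G.Adj x a) (xb : G.Adj x b) (xc : G.Adj x c) (xd : G.Adj x d)
    (qa : ¬ G.Adj q a) (qc : ¬ G.Adj q c) (qx : ¬ G.Adj q x) (qb : G.Adj q b) : False := by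
  obtain ⟨z, hzq, hza, hzb⟩ := B.c2 q a b
  by_cases hzc : G.Adj z c
  · exact B.kill (a := q) (b := a) (c := b) (d := c) (u := c)
      (neNA qx xa.symm) qb.ne (neNA qx xc.symm) dab dac dbc
      ⟨x, xa.symm, qx⟩ ⟨a, hab.symm, qa, G.irrefl⟩ ⟨z, hzc.symm, nsymm hzq, nsymm hza, nsymm hzb⟩
      (nsymm qc) (nsymm nac) (nsymm nbc) G.irrefl
  · by_cases hzd : G.Adj z d
    · by_cases hqd : G.Adj q d
      · -- q is adjacent to b and d only: apply IA with (a, b, d, c)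
        have cov' : ∀ z0 : V, G.Adj z0 a ∨ G.Adj z0 b ∨ G.Adj z0 d ∨ G.Adj z0 c := by
          intro z0
          rcases cov z0 with h' | h' | h' | h'
          · exact Or.inl h'
          · exact Or.inr (Or.inl h')
          · exact Or.inr (Or.inr (Or.inr h'))
          · exact Or.inr (Or.inr (Or.inl h'))
        exact match_IA B a b d c dab dad dac dbd dbc dcd.symm hab hcd.symm nad nac nbd nbc
          cov' q qb hqd qa qc
      · exact B.kill (a := q) (b := a) (c := b) (d := d) (u := d)
          (neNA qx xa.symm) qb.ne (neNA qx xd.symm) dab dad dbd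
          ⟨x, xa.symm, qx⟩ ⟨a, hab.symm, qa, G.irrefl⟩ ⟨z, hzd.symm, nsymm hzq, nsymm hza, nsymm hzb⟩
          (nsymm hqd) (nsymm nad) (nsymm nbd) G.irrefl
    · rcases cov z with h | h | h | h
      exacts [hza h, hzb h, hzc h, hzd h]

/-- Case I dispatcher : `x ~ b`, `x ~ c`. -/
lemma match_caseI (B : Base G) (a b c d : V)
    (dab : a ≠ b) (dac : a ≠ c) (dad : a ≠ d) (dbc : b ≠ c) (dbd : b ≠ d) (dcd : c ≠ d)
    (hab : G.Adj a b) (hcd : G.Adj c d)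
    (nac : ¬ G.Adj a c) (nad : ¬ G.Adj a d) (nbc : ¬ G.Adj b c) (nbd : ¬ G.Adj b d)
    (cov : ∀ z : V, G.Adj z a ∨ G.Adj z b ∨ G.Adj z c ∨ G.Adj z d)
    (x : V) (xb : G.Adj x b) (xc : G.Adj x c) : False := by
  by_cases hxa : G.Adj x a
  · by_cases hxd : G.Adj x d
    · -- I.D
      obtain ⟨q, hqa, hqc, hqx⟩ := B.c2 a c x
      rcases cov q with h | h | h | h
      · exact hqa h
      · exact match_ID2 B a b c d dab dac dad dbc dbd dcd hab hcd nac nad nbc nbd cov x q hxa xb xc hxd hqa hqc hqx h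
      · exact hqc h
      · have cov' : ∀ z0 : V, G.Adj z0 c ∨ G.Adj z0 d ∨ G.Adj z0 a ∨ G.Adj z0 b := by
          intro z0
          rcases cov z0 with h' | h' | h' | h'
          · exact Or.inr (Or.inr (Or.inl h'))
          · exact Or.inr (Or.inr (Or.inr h'))
          · exact Or.inl h'
          · exact Or.inr (Or.inl h')
        exact match_ID2 B c d a b dcd dac.symm dbc.symm dad.symm dbd.symm dab hcd hab
          (nsymm nac) (nsymm nbc) (nsymm nad) (nsymm nbd) cov'
          x q xc hxd hxa xb hqc hqa hqx h
    · exact match_IB B a b c d dab dac dad dbc dbd dcd hab hcd nac nad nbc nbd cov x hxa xb xc hxd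
  · by_cases hxd : G.Adj x d
    · have cov' : ∀ z0 : V, G.Adj z0 d ∨ G.Adj z0 c ∨ G.Adj z0 b ∨ G.Adj z0 a := by
        intro z0
        rcases cov z0 with h' | h' | h' | h'
        · exact Or.inr (Or.inr (Or.inr h'))
        · exact Or.inr (Or.inr (Or.inl h'))
        · exact Or.inr (Or.inl h')
        · exact Or.inl h'
      exact match_IB B d c b a dcd.symm dbd.symm dad.symm dbc.symm dac.symm dab.symm
        hcd.symm hab.symm (nsymm nbd) (nsymm nad) (nsymm nbc) (nsymm nac)
        cov' x hxd xc xb hxa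
    · exact match_IA B a b c d dab dac dad dbc dbd dcd hab hcd nac nad nbc nbd cov x xb xc hxa hxd

/-- Case II.1 : bridge x–y, `x ~ b` only, `y ~ c` only. -/
lemma match_II1 (B : Base G) (a b c d : V)
    (dab : a ≠ b) (dac : a ≠ c) (dad : a ≠ d) (dbc : b ≠ c) (dbd : b ≠ d) (dcd : c ≠ d)
    (hab : G.Adj a b) (hcd : G.Adj c d)
    (nac : ¬ G.Adj a c) (nad : ¬ G.Adj a d) (nbc : ¬ G.Adj b c) (nbd : ¬ G.Adj b d)
    (cov : ∀ z : V, G.Adj z a ∨ G.Adj z b ∨ G.Adj z c ∨ G.Adj z d)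
    (x y : V) (hxy : G.Adj x y)
    (xb : G.Adj x b) (xa : ¬ G.Adj x a) (xc : ¬ G.Adj x c) (xd : ¬ G.Adj x d)
    (yc : G.Adj y c) (yd : ¬ G.Adj y d) (ya : ¬ G.Adj y a) (yb : ¬ G.Adj y b) : False := by
  obtain ⟨z, hzx, hzy, hzc⟩ := B.c2 x y c
  by_cases hza : G.Adj z a
  · exact B.kill (a := x) (b := y) (c := c) (d := a) (u := a)
      hxy.ne (neAN xb (nsymm nbc)) (neAN hxy (nsymm ya)) yc.ne (neAN yc nac) dac.symm
      ⟨c, yc, xc⟩ ⟨d, hcd, xd, yd⟩ ⟨z, hza.symm, nsymm hzx, nsymm hzy, nsymm hzc⟩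
      (nsymm xa) (nsymm ya) nac G.irrefl
  · by_cases hzd : G.Adj z d
    · exact B.kill (a := x) (b := y) (c := c) (d := d) (u := a)
        hxy.ne (neAN xb (nsymm nbc)) (neAN xb (nsymm nbd)) yc.ne (neAN hxy.symm (nsymm xd)) dcd
        ⟨c, yc, xc⟩ ⟨d, hcd, xd, yd⟩ ⟨z, hzd.symm, nsymm hzx, nsymm hzy, nsymm hzc⟩
        (nsymm xa) (nsymm ya) nac nad
    · have hzb : G.Adj z b := by
        rcases cov z with h | h | h | h
        exacts [absurd h hza, h, absurd h hzc, absurd h hzd]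
      exact B.kill (a := z) (b := x) (c := b) (d := c) (u := c)
        (neNA hzy hxy) hzb.ne (neAN hzb (nsymm nbc)) xb.ne (neAN xb (nsymm nbc)) dbc
        ⟨y, hxy, hzy⟩ ⟨a, hab.symm, hza, xa⟩ ⟨d, hcd, hzd, xd, nbd⟩
        (nsymm hzc) (nsymm xc) (nsymm nbc) G.irrefl

/-- Case II.2 : bridge x–y, `x ~ a, b`, `y ~ c` only. -/
lemma match_II2 (B : Base G) (a b c d : V)
    (dab : a ≠ b) (dac : a ≠ c) (dad : a ≠ d) (dbc : b ≠ c) (dbd : b ≠ d) (dcd : c ≠ d)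
    (hab : G.Adj a b) (hcd : G.Adj c d)
    (nac : ¬ G.Adj a c) (nad : ¬ G.Adj a d) (nbc : ¬ G.Adj b c) (nbd : ¬ G.Adj b d)
    (side : ∀ z : V, ¬ ((G.Adj z a ∨ G.Adj z b) ∧ (G.Adj z c ∨ G.Adj z d)))
    (x y : V) (hxy : G.Adj x y)
    (xa : G.Adj x a) (xb : G.Adj x b) (xc : ¬ G.Adj x c) (xd : ¬ G.Adj x d)
    (yc : G.Adj y c) (yd : ¬ G.Adj y d) (ya : ¬ G.Adj y a) (yb : ¬ G.Adj y b) : False := by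
  obtain ⟨z, hzx, hzy, hzc⟩ := B.c2 x y c
  by_cases hzd : G.Adj z d
  · have hza : ¬ G.Adj z a := fun h => side z ⟨Or.inl h, Or.inr hzd⟩
    have hzb : ¬ G.Adj z b := fun h => side z ⟨Or.inr h, Or.inr hzd⟩
    exact B.kill (a := b) (b := x) (c := y) (d := d) (u := d)
      xb.ne.symm (neAN hab.symm ya) dbd hxy.ne (neAN xb (nsymm nbd)) (neAN hxy.symm (nsymm xd))
      ⟨y, hxy, nsymm yb⟩ ⟨c, yc, nbc, xc⟩ ⟨z, hzd.symm, nsymm hzb, nsymm hzx, nsymm hzy⟩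
      (nsymm nbd) (nsymm xd) (nsymm yd) G.irrefl
  · exact B.kill (a := z) (b := a) (c := x) (d := c) (u := c)
      (neNA hzx xa.symm) (neNA hzy hxy) (neNA hzy yc.symm) xa.ne.symm dac (neAN xb (nsymm nbc))
      ⟨x, xa.symm, hzx⟩ ⟨y, hxy, hzy, nsymm ya⟩ ⟨d, hcd, hzd, nad, xd⟩
      (nsymm hzc) (nsymm nac) (nsymm xc) G.irrefl

/-- Case II.4 : bridge x–y, `x ~ a, b`, `y ~ c, d`. -/
lemma match_II4 (B : Base G) (a b c d : V)
    (dab : a ≠ b) (dac : a ≠ c) (dad : a ≠ d) (dbc : b ≠ c) (dbd : b ≠ d) (dcd : c ≠ d)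
    (hab : G.Adj a b) (hcd : G.Adj c d)
    (nac : ¬ G.Adj a c) (nad : ¬ G.Adj a d) (nbc : ¬ G.Adj b c) (nbd : ¬ G.Adj b d)
    (side : ∀ z : V, ¬ ((G.Adj z a ∨ G.Adj z b) ∧ (G.Adj z c ∨ G.Adj z d)))
    (x y : V) (hxy : G.Adj x y)
    (xa : G.Adj x a) (xb : G.Adj x b) (xc : ¬ G.Adj x c) (xd : ¬ G.Adj x d)
    (yc : G.Adj y c) (yd : G.Adj y d) (ya : ¬ G.Adj y a) (yb : ¬ G.Adj y b) : False := by
  obtain ⟨z, hzx, hzy, hzc⟩ := B.c2 x y c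
  by_cases hzd : G.Adj z d
  · have hza : ¬ G.Adj z a := fun h => side z ⟨Or.inl h, Or.inr hzd⟩
    have hzb : ¬ G.Adj z b := fun h => side z ⟨Or.inr h, Or.inr hzd⟩
    exact B.kill (a := z) (b := d) (c := y) (d := b) (u := b)
      hzd.ne (neNA hzx hxy.symm) (neAN hzd nbd) (neAN hxy.symm (nsymm xd)).symm
      dbd.symm (neAN yc nbc)
      ⟨c, hcd.symm, hzc⟩ ⟨x, hxy.symm, hzx, nsymm xd⟩ ⟨a, hab.symm, hza, nsymm nad, ya⟩
      (nsymm hzb) nbd (nsymm yb) G.irrefl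
  · exact B.kill (a := z) (b := a) (c := x) (d := c) (u := c)
      (neNA hzx xa.symm) (neNA hzy hxy) (neNA hzy yc.symm) xa.ne.symm dac (neAN xb (nsymm nbc))
      ⟨x, xa.symm, hzx⟩ ⟨y, hxy, hzy, nsymm ya⟩ ⟨d, hcd, hzd, nad, xd⟩
      (nsymm hzc) (nsymm nac) (nsymm xc) G.irrefl

lemma cross_edge {u w : V} (p : G.Walk u w) (P : V → Prop) (hu : P u) (hw : ¬ P w) :
    ∃ x y : V, G.Adj x y ∧ P x ∧ ¬ P y := by
  induction p with
  | nil => exact absurd hu hw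
  | @cons u' v' w' h p ih =>
    by_cases hv : P v'
    · exact ih hv hw
    · exact ⟨u', v', h, hu, hv⟩

/-- The main matching lemma: if `{a,b,c,d}` is a dominating 4-set whose induced
graph is the perfect matching `ab | cd`, we get a contradiction. -/
lemma match_core (B : Base G) (a b c d : V)
    (dab : a ≠ b) (dac : a ≠ c) (dad : a ≠ d) (dbc : b ≠ c) (dbd : b ≠ d) (dcd : c ≠ d)
    (hab : G.Adj a b) (hcd : G.Adj c d)
    (nac : ¬ G.Adj a c) (nad : ¬ G.Adj a d) (nbc : ¬ G.Adj b c) (nbd : ¬ G.Adj b d)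
    (cov : ∀ z : V, G.Adj z a ∨ G.Adj z b ∨ G.Adj z c ∨ G.Adj z d) : False := by
  by_cases hAB : ∃ x : V, (G.Adj x a ∨ G.Adj x b) ∧ (G.Adj x c ∨ G.Adj x d)
  · obtain ⟨x, h1, h2⟩ := hAB
    have covba : ∀ z0 : V, G.Adj z0 b ∨ G.Adj z0 a ∨ G.Adj z0 c ∨ G.Adj z0 d := by
      intro z0
      rcases cov z0 with h | h | h | h
      · exact Or.inr (Or.inl h)
      · exact Or.inl h
      · exact Or.inr (Or.inr (Or.inl h))
      · exact Or.inr (Or.inr (Or.inr h))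
    have covdc : ∀ z0 : V, G.Adj z0 a ∨ G.Adj z0 b ∨ G.Adj z0 d ∨ G.Adj z0 c := by
      intro z0
      rcases cov z0 with h | h | h | h
      · exact Or.inl h
      · exact Or.inr (Or.inl h)
      · exact Or.inr (Or.inr (Or.inr h))
      · exact Or.inr (Or.inr (Or.inl h))
    have covbadc : ∀ z0 : V, G.Adj z0 b ∨ G.Adj z0 a ∨ G.Adj z0 d ∨ G.Adj z0 c := by
      intro z0
      rcases cov z0 with h | h | h | h
      · exact Or.inr (Or.inl h)
      · exact Or.inl h
      · exact Or.inr (Or.inr (Or.inr h))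
      · exact Or.inr (Or.inr (Or.inl h))
    rcases h1 with h1 | h1 <;> rcases h2 with h2 | h2
    · exact match_caseI B b a c d dab.symm dbc dbd dac dad dcd hab.symm hcd
        nbc nbd nac nad covba x h1 h2
    · exact match_caseI B b a d c dab.symm dbd dbc dad dac dcd.symm hab.symm hcd.symm
        nbd nbc nad nac covbadc x h1 h2
    · exact match_caseI B a b c d dab dac dad dbc dbd dcd hab hcd
        nac nad nbc nbd cov x h1 h2
    · exact match_caseI B a b d c dab dad dac dbd dbc dcd.symm hab hcd.symm
        nad nac nbd nbc covdc x h1 h2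
  · have side : ∀ z : V, ¬ ((G.Adj z a ∨ G.Adj z b) ∧ (G.Adj z c ∨ G.Adj z d)) :=
      fun z h => hAB ⟨z, h⟩
    obtain ⟨p⟩ := B.reach a c
    obtain ⟨x, y, hxy, hPx, hPy⟩ := cross_edge p (fun z => G.Adj z a ∨ G.Adj z b)
      (Or.inr hab) (fun h => side c ⟨h, Or.inr hcd⟩)
    have hyB : G.Adj y c ∨ G.Adj y d := by
      rcases cov y with h | h | h | h
      · exact absurd (Or.inl h) hPy
      · exact absurd (Or.inr h) hPy
      · exact Or.inl h
      · exact Or.inr h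
    have hxc : ¬ G.Adj x c := fun h => side x ⟨hPx, Or.inl h⟩
    have hxd : ¬ G.Adj x d := fun h => side x ⟨hPx, Or.inr h⟩
    have hya : ¬ G.Adj y a := fun h => hPy (Or.inl h)
    have hyb : ¬ G.Adj y b := fun h => hPy (Or.inr h)
    -- reorderings of side for permuted calls
    have sideba : ∀ z : V, ¬ ((G.Adj z b ∨ G.Adj z a) ∧ (G.Adj z c ∨ G.Adj z d)) :=
      fun z h => side z ⟨h.1.symm, h.2⟩
    have sidedc : ∀ z : V, ¬ ((G.Adj z a ∨ G.Adj z b) ∧ (G.Adj z d ∨ G.Adj z c)) :=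
      fun z h => side z ⟨h.1, h.2.symm⟩
    have sidecd' : ∀ z : V, ¬ ((G.Adj z d ∨ G.Adj z c) ∧ (G.Adj z b ∨ G.Adj z a)) :=
      fun z h => side z ⟨h.2.symm, h.1.symm⟩
    have sidedc' : ∀ z : V, ¬ ((G.Adj z d ∨ G.Adj z c) ∧ (G.Adj z a ∨ G.Adj z b)) :=
      fun z h => side z ⟨h.2, h.1.symm⟩
    have covba : ∀ z0 : V, G.Adj z0 b ∨ G.Adj z0 a ∨ G.Adj z0 c ∨ G.Adj z0 d := by
      intro z0
      rcases cov z0 with h | h | h | h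
      · exact Or.inr (Or.inl h)
      · exact Or.inl h
      · exact Or.inr (Or.inr (Or.inl h))
      · exact Or.inr (Or.inr (Or.inr h))
    have covbadc : ∀ z0 : V, G.Adj z0 b ∨ G.Adj z0 a ∨ G.Adj z0 d ∨ G.Adj z0 c := by
      intro z0
      rcases cov z0 with h | h | h | h
      · exact Or.inr (Or.inl h)
      · exact Or.inl h
      · exact Or.inr (Or.inr (Or.inr h))
      · exact Or.inr (Or.inr (Or.inl h))
    have covdc : ∀ z0 : V, G.Adj z0 a ∨ G.Adj z0 b ∨ G.Adj z0 d ∨ G.Adj z0 c := by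
      intro z0
      rcases cov z0 with h | h | h | h
      · exact Or.inl h
      · exact Or.inr (Or.inl h)
      · exact Or.inr (Or.inr (Or.inr h))
      · exact Or.inr (Or.inr (Or.inl h))
    by_cases hxa : G.Adj x a <;> by_cases hxb : G.Adj x b
    · -- x ~ a and b
      rcases hyB with hyc | hyd
      · by_cases hyd : G.Adj y d
        · exact match_II4 B a b c d dab dac dad dbc dbd dcd hab hcd nac nad nbc nbd
            side x y hxy hxa hxb hxc hxd hyc hyd hya hyb
        · exact match_II2 B a b c d dab dac dad dbc dbd dcd hab hcd nac nad nbc nbd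
            side x y hxy hxa hxb hxc hxd hyc hyd hya hyb
      · by_cases hyc : G.Adj y c
        · exact match_II4 B a b c d dab dac dad dbc dbd dcd hab hcd nac nad nbc nbd
            side x y hxy hxa hxb hxc hxd hyc hyd hya hyb
        · exact match_II2 B a b d c dab dad dac dbd dbc dcd.symm hab hcd.symm
            nad nac nbd nbc sidedc x y hxy hxa hxb hxd hxc hyd hyc hya hyb
    · -- x ~ a only
      rcases hyB with hyc | hyd
      · by_cases hyd : G.Adj y d
        · exact match_II2 B d c a b dcd.symm dad.symm dbd.symm dac.symm dbc.symm dab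
            hcd.symm hab (nsymm nad) (nsymm nbd) (nsymm nac) (nsymm nbc)
            sidedc' y x hxy.symm hyd hyc hya hyb hxa hxb hxd hxc
        · exact match_II1 B b a c d dab.symm dbc dbd dac dad dcd hab.symm hcd
            nbc nbd nac nad covba x y hxy hxa hxb hxc hxd hyc hyd hyb hya
      · by_cases hyc : G.Adj y c
        · exact match_II2 B d c a b dcd.symm dad.symm dbd.symm dac.symm dbc.symm dab
            hcd.symm hab (nsymm nad) (nsymm nbd) (nsymm nac) (nsymm nbc)
            sidedc' y x hxy.symm hyd hyc hya hyb hxa hxb hxd hxc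
        · exact match_II1 B b a d c dab.symm dbd dbc dad dac dcd.symm hab.symm hcd.symm
            nbd nbc nad nac covbadc x y hxy hxa hxb hxd hxc hyd hyc hyb hya
    · -- x ~ b only
      rcases hyB with hyc | hyd
      · by_cases hyd : G.Adj y d
        · exact match_II2 B d c b a dcd.symm dbd.symm dad.symm dbc.symm dac.symm dab.symm
            hcd.symm hab.symm (nsymm nbd) (nsymm nad) (nsymm nbc) (nsymm nac)
            sidecd' y x hxy.symm hyd hyc hyb hya hxb hxa hxd hxc
        · exact match_II1 B a b c d dab dac dad dbc dbd dcd hab hcd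
            nac nad nbc nbd cov x y hxy hxb hxa hxc hxd hyc hyd hya hyb
      · by_cases hyc : G.Adj y c
        · exact match_II2 B d c b a dcd.symm dbd.symm dad.symm dbc.symm dac.symm dab.symm
            hcd.symm hab.symm (nsymm nbd) (nsymm nad) (nsymm nbc) (nsymm nac)
            sidecd' y x hxy.symm hyd hyc hyb hya hxb hxa hxd hxc
        · exact match_II1 B a b d c dab dad dac dbd dbc dcd.symm hab hcd.symm
            nad nac nbd nbc covdc x y hxy hxb hxa hxd hxc hyd hyc hya hyb
    · -- x adjacent to neither a nor b : contradiction with hPx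
      rcases hPx with h | h
      exacts [hxa h, hxb h]

end Match

/-- Configuration: `vv` is a legal dominating 4-tuple, `tt i` is a "private" vertex
seen only by `vv i` among the `vv`'s; the `tt`'s also form a legal dominating 4-tuple. -/
structure Config (G : SimpleGraph V) (vv tt : Fin 4 → V) : Prop where
  hvt : ∀ i, G.Adj (vv i) (tt i)
  hcross : ∀ i j, i ≠ j → ¬ G.Adj (vv i) (tt j)
  hvv : ∀ i j, i ≠ j → vv i ≠ vv j
  htt : ∀ i j, i ≠ j → tt i ≠ tt j
  covv : ∀ z, ∃ i, G.Adj z (vv i)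
  covt : ∀ z, ∃ i, G.Adj z (tt i)

namespace Config

variable {vv tt : Fin 4 → V}

lemma perm (cfg : Config G vv tt) (σ : Equiv.Perm (Fin 4)) :
    Config G (vv ∘ σ) (tt ∘ σ) where
  hvt i := cfg.hvt (σ i)
  hcross i j h := cfg.hcross (σ i) (σ j) (fun e => h (σ.injective e))
  hvv i j h := cfg.hvv (σ i) (σ j) (fun e => h (σ.injective e))
  htt i j h := cfg.htt (σ i) (σ j) (fun e => h (σ.injective e))
  covv z := by
    obtain ⟨i, hi⟩ := cfg.covv z
    exact ⟨σ.symm i, by simpa using hi⟩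
  covt z := by
    obtain ⟨i, hi⟩ := cfg.covt z
    exact ⟨σ.symm i, by simpa using hi⟩

lemma swap (cfg : Config G vv tt) : Config G tt vv where
  hvt i := (cfg.hvt i).symm
  hcross i j h := fun hadj => cfg.hcross j i h.symm hadj.symm
  hvv := cfg.htt
  htt := cfg.hvv
  covv := cfg.covt
  covt := cfg.covv

lemma covvOr (cfg : Config G vv tt) (z : V) :
    G.Adj z (vv 0) ∨ G.Adj z (vv 1) ∨ G.Adj z (vv 2) ∨ G.Adj z (vv 3) := by
  obtain ⟨i, hi⟩ := cfg.covv z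
  fin_cases i
  exacts [Or.inl hi, Or.inr (Or.inl hi), Or.inr (Or.inr (Or.inl hi)),
    Or.inr (Or.inr (Or.inr hi))]

lemma covtOr (cfg : Config G vv tt) (z : V) :
    G.Adj z (tt 0) ∨ G.Adj z (tt 1) ∨ G.Adj z (tt 2) ∨ G.Adj z (tt 3) := by
  obtain ⟨i, hi⟩ := cfg.covt z
  fin_cases i
  exacts [Or.inl hi, Or.inr (Or.inl hi), Or.inr (Or.inr (Or.inl hi)),
    Or.inr (Or.inr (Or.inr hi))]

end Config

section RParts

variable {vv tt : Fin 4 → V}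

/-- Shape 1 of the identification analysis : `vv 0 = tt 1` and `vv 2 = tt 3`. -/
lemma shape1 (B : Base G) (cfg : Config G vv tt) (hid : vv 0 = tt 1) (hid2 : vv 2 = tt 3) :
    False := by
  have K01 : G.Adj (vv 0) (vv 1) := by rw [hid]; exact (cfg.hvt 1).symm
  have K23 : G.Adj (vv 2) (vv 3) := by rw [hid2]; exact (cfg.hvt 3).symm
  have nK02 : ¬ G.Adj (vv 0) (vv 2) := by
    rw [hid]; exact fun h => cfg.hcross 2 1 (by decide) h.symm
  have nK03 : ¬ G.Adj (vv 0) (vv 3) := by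
    rw [hid]; exact fun h => cfg.hcross 3 1 (by decide) h.symm
  have nK12 : ¬ G.Adj (vv 1) (vv 2) := by
    rw [hid2]; exact cfg.hcross 1 3 (by decide)
  by_cases hK13 : G.Adj (vv 1) (vv 3)
  · by_cases hH02 : G.Adj (tt 0) (tt 2)
    · -- induced C6 : v1 v3 v2 t2 t0 v0
      have e14 : vv 1 ≠ tt 2 := fun he => cfg.hcross 1 0 (by decide) (by rw [he]; exact hH02.symm)
      have e15 : vv 1 ≠ tt 0 := fun he => cfg.hcross 1 2 (by decide) (by rw [he]; exact hH02)
      have e24 : vv 3 ≠ tt 2 := fun he => cfg.hcross 3 0 (by decide) (by rw [he]; exact hH02.symm)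
      have e25 : vv 3 ≠ tt 0 := fun he => cfg.hcross 3 2 (by decide) (by rw [he]; exact hH02)
      have e35 : vv 2 ≠ tt 0 := fun he => cfg.htt 3 0 (by decide) (hid2.symm.trans he)
      have e46 : tt 2 ≠ vv 0 := fun he => cfg.htt 1 2 (by decide) (hid.symm.trans he.symm)
      have e56 : tt 0 ≠ vv 0 := fun he => cfg.htt 1 0 (by decide) (hid.symm.trans he.symm)
      exact B.noC6 (vv 1) (vv 3) (vv 2) (tt 2) (tt 0) (vv 0)
        (cfg.hvv 1 3 (by decide)) (cfg.hvv 1 2 (by decide)) e14 e15 (cfg.hvv 1 0 (by decide))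
        (cfg.hvv 3 2 (by decide)) e24 e25 (cfg.hvv 3 0 (by decide))
        (cfg.hvt 2).ne e35 (cfg.hvv 2 0 (by decide))
        (cfg.htt 2 0 (by decide)) e46 e56
        hK13 K23.symm (cfg.hvt 2) hH02.symm (cfg.hvt 0).symm K01
        nK12 (cfg.hcross 1 2 (by decide)) (cfg.hcross 1 0 (by decide))
        (cfg.hcross 3 2 (by decide)) (cfg.hcross 3 0 (by decide)) (fun h => nK03 h.symm)
        (cfg.hcross 2 0 (by decide)) (fun h => nK02 h.symm)
        (fun h => cfg.hcross 0 2 (by decide) h.symm)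
    · -- matching on the t-side
      refine match_core B (tt 0) (tt 1) (tt 2) (tt 3)
        (cfg.htt 0 1 (by decide)) (cfg.htt 0 2 (by decide)) (cfg.htt 0 3 (by decide))
        (cfg.htt 1 2 (by decide)) (cfg.htt 1 3 (by decide)) (cfg.htt 2 3 (by decide))
        (by rw [← hid]; exact (cfg.hvt 0).symm) (by rw [← hid2]; exact (cfg.hvt 2).symm)
        hH02 ?_ ?_ ?_ cfg.covtOr
      · rw [← hid2]; exact fun h => cfg.hcross 2 0 (by decide) h.symm
      · rw [← hid]; exact cfg.hcross 0 2 (by decide)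
      · rw [← hid]; exact cfg.hcross 0 3 (by decide)
  · -- matching on the v-side
    refine match_core B (vv 0) (vv 1) (vv 2) (vv 3)
      (cfg.hvv 0 1 (by decide)) (cfg.hvv 0 2 (by decide)) (cfg.hvv 0 3 (by decide))
      (cfg.hvv 1 2 (by decide)) (cfg.hvv 1 3 (by decide)) (cfg.hvv 2 3 (by decide))
      K01 K23 nK02 nK03 nK12 hK13 cfg.covvOr

/-- Shape 2 of the identification analysis : `vv 0 = tt 1` and `vv 3 = tt 2`. -/
lemma shape2 (B : Base G) (cfg : Config G vv tt) (hid : vv 0 = tt 1) (hid3 : vv 3 = tt 2) :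
    False := by
  have K01 : G.Adj (vv 0) (vv 1) := by rw [hid]; exact (cfg.hvt 1).symm
  have K23 : G.Adj (vv 2) (vv 3) := by rw [hid3]; exact cfg.hvt 2
  have nK02 : ¬ G.Adj (vv 0) (vv 2) := by
    rw [hid]; exact fun h => cfg.hcross 2 1 (by decide) h.symm
  have nK03 : ¬ G.Adj (vv 0) (vv 3) := by
    rw [hid]; exact fun h => cfg.hcross 3 1 (by decide) h.symm
  have nK13 : ¬ G.Adj (vv 1) (vv 3) := by
    rw [hid3]; exact cfg.hcross 1 2 (by decide)
  by_cases hK12 : G.Adj (vv 1) (vv 2)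
  · by_cases hH03 : G.Adj (tt 0) (tt 3)
    · -- induced C6 : v0 v1 v2 v3 t3 t0
      refine B.noC6 (vv 0) (vv 1) (vv 2) (vv 3) (tt 3) (tt 0)
        (cfg.hvv 0 1 (by decide)) (cfg.hvv 0 2 (by decide)) (cfg.hvv 0 3 (by decide))
        ?_ ?_
        (cfg.hvv 1 2 (by decide)) (cfg.hvv 1 3 (by decide)) ?_ ?_
        (cfg.hvv 2 3 (by decide)) ?_ ?_
        (cfg.hvt 3).ne ?_ (cfg.htt 3 0 (by decide))
        K01 hK12 K23 (cfg.hvt 3) hH03.symm (cfg.hvt 0).symm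
        nK02 nK03 (cfg.hcross 0 3 (by decide)) nK13 (cfg.hcross 1 3 (by decide))
        (cfg.hcross 1 0 (by decide)) (cfg.hcross 2 3 (by decide))
        (cfg.hcross 2 0 (by decide)) (cfg.hcross 3 0 (by decide))
      · exact fun he => cfg.htt 1 3 (by decide) (hid.symm.trans he)
      · exact fun he => cfg.htt 1 0 (by decide) (hid.symm.trans he)
      · exact fun he => cfg.hcross 1 0 (by decide) (by rw [he]; exact hH03.symm)
      · exact fun he => cfg.hcross 1 3 (by decide) (by rw [he]; exact hH03)
      · exact fun he => cfg.hcross 2 0 (by decide) (by rw [he]; exact hH03.symm)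
      · exact fun he => cfg.hcross 2 3 (by decide) (by rw [he]; exact hH03)
      · exact fun he => cfg.htt 2 0 (by decide) (hid3.symm.trans he)
    · -- matching on the t-side
      refine match_core B (tt 0) (tt 1) (tt 2) (tt 3)
        (cfg.htt 0 1 (by decide)) (cfg.htt 0 2 (by decide)) (cfg.htt 0 3 (by decide))
        (cfg.htt 1 2 (by decide)) (cfg.htt 1 3 (by decide)) (cfg.htt 2 3 (by decide))
        (by rw [← hid]; exact (cfg.hvt 0).symm) (by rw [← hid3]; exact (cfg.hvt 3))
        ?_ hH03 ?_ ?_ cfg.covtOr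
      · rw [← hid3]; exact fun h => cfg.hcross 3 0 (by decide) h.symm
      · rw [← hid]; exact cfg.hcross 0 2 (by decide)
      · rw [← hid]; exact cfg.hcross 0 3 (by decide)
  · -- matching on the v-side
    refine match_core B (vv 0) (vv 1) (vv 2) (vv 3)
      (cfg.hvv 0 1 (by decide)) (cfg.hvv 0 2 (by decide)) (cfg.hvv 0 3 (by decide))
      (cfg.hvv 1 2 (by decide)) (cfg.hvv 1 3 (by decide)) (cfg.hvv 2 3 (by decide))
      K01 K23 nK02 nK03 hK12 nK13 cfg.covvOr

/-- Core of the identification analysis : `vv 0 = tt 1`. -/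
lemma r1core (B : Base G) (cfg : Config G vv tt) (hid : vv 0 = tt 1) : False := by
  have K01 : G.Adj (vv 0) (vv 1) := by rw [hid]; exact (cfg.hvt 1).symm
  have H01 : G.Adj (tt 0) (tt 1) := by rw [← hid]; exact (cfg.hvt 0).symm
  have nK02 : ¬ G.Adj (vv 0) (vv 2) := by
    rw [hid]; exact fun h => cfg.hcross 2 1 (by decide) h.symm
  have nK03 : ¬ G.Adj (vv 0) (vv 3) := by
    rw [hid]; exact fun h => cfg.hcross 3 1 (by decide) h.symm
  have nH12 : ¬ G.Adj (tt 1) (tt 2) := by rw [← hid]; exact cfg.hcross 0 2 (by decide)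
  have nH13 : ¬ G.Adj (tt 1) (tt 3) := by rw [← hid]; exact cfg.hcross 0 3 (by decide)
  by_cases hK23 : G.Adj (vv 2) (vv 3) <;> by_cases hH23 : G.Adj (tt 2) (tt 3)
  · -- b4 : both
    by_cases hid2 : vv 2 = tt 3
    · exact shape1 B cfg hid hid2
    · by_cases hid3 : vv 3 = tt 2
      · exact shape2 B cfg hid hid3
      · exact B.noC4 (vv 2) (vv 3) (tt 3) (tt 2)
          (cfg.hvv 2 3 (by decide)) hid2 (cfg.hvt 2).ne
          (cfg.hvt 3).ne hid3 (cfg.htt 3 2 (by decide))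
          hK23 (cfg.hvt 3) hH23.symm (cfg.hvt 2).symm
          (cfg.hcross 2 3 (by decide)) (cfg.hcross 3 2 (by decide))
  · -- b2 : K23, not H23
    have hH20 : G.Adj (tt 2) (tt 0) := by
      obtain ⟨i, hi⟩ := cfg.covt (tt 2)
      fin_cases i
      · exact hi
      · exact absurd hi.symm nH12
      · exact absurd hi G.irrefl
      · exact absurd hi hH23
    have hH30 : G.Adj (tt 3) (tt 0) := by
      obtain ⟨i, hi⟩ := cfg.covt (tt 3)
      fin_cases i
      · exact hi
      · exact absurd hi.symm nH13
      · exact absurd hi.symm hH23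
      · exact absurd hi G.irrefl
    have e13 : vv 2 ≠ tt 0 := fun he => cfg.hcross 2 3 (by decide) (by rw [he]; exact hH30.symm)
    have e14 : vv 2 ≠ tt 3 := fun he => cfg.hcross 2 0 (by decide) (by rw [he]; exact hH30)
    have e23 : tt 2 ≠ vv 3 := fun he => cfg.hcross 3 0 (by decide) (by rw [← he]; exact hH20)
    have e35 : tt 0 ≠ vv 3 := fun he => cfg.hcross 3 2 (by decide) (by rw [← he]; exact hH20.symm)
    exact B.noC5 (vv 2) (tt 2) (tt 0) (tt 3) (vv 3)
      (cfg.hvt 2).ne e13 e14 (cfg.hvv 2 3 (by decide))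
      (cfg.htt 2 0 (by decide)) (cfg.htt 2 3 (by decide)) e23
      (cfg.htt 0 3 (by decide)) e35 (cfg.hvt 3).ne.symm
      (cfg.hvt 2) hH20 hH30.symm (cfg.hvt 3).symm hK23.symm
      (cfg.hcross 2 0 (by decide)) (cfg.hcross 2 3 (by decide)) hH23
      (fun h => cfg.hcross 3 2 (by decide) h.symm) (fun h => cfg.hcross 3 0 (by decide) h.symm)
  · -- b3 : H23, not K23
    have hK21 : G.Adj (vv 2) (vv 1) := by
      obtain ⟨i, hi⟩ := cfg.covv (vv 2)
      fin_cases i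
      · exact absurd hi.symm nK02
      · exact hi
      · exact absurd hi G.irrefl
      · exact absurd hi hK23
    have hK31 : G.Adj (vv 3) (vv 1) := by
      obtain ⟨i, hi⟩ := cfg.covv (vv 3)
      fin_cases i
      · exact absurd hi.symm nK03
      · exact hi
      · exact absurd hi.symm hK23
      · exact absurd hi G.irrefl
    have e14 : vv 2 ≠ tt 3 := fun he => hK23 (show G.Adj (vv 2) (vv 3) by rw [he]; exact (cfg.hvt 3).symm)
    have e23 : vv 1 ≠ tt 3 := fun he => cfg.hcross 1 2 (by decide) (by rw [he]; exact hH23.symm)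
    have e25 : vv 1 ≠ tt 2 := fun he => cfg.hcross 1 3 (by decide) (by rw [he]; exact hH23)
    have e34 : vv 3 ≠ tt 3 := (cfg.hvt 3).ne
    have e35 : vv 3 ≠ tt 2 := fun he => hK23 (show G.Adj (vv 2) (vv 3) by rw [he]; exact cfg.hvt 2)
    exact B.noC5 (vv 2) (vv 1) (vv 3) (tt 3) (tt 2)
      (cfg.hvv 2 1 (by decide)) (cfg.hvv 2 3 (by decide)) e14 (cfg.hvt 2).ne
      (cfg.hvv 1 3 (by decide)) e23 e25
      e34 e35 (cfg.htt 3 2 (by decide))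
      hK21 hK31.symm (cfg.hvt 3) hH23.symm (cfg.hvt 2).symm
      hK23 (cfg.hcross 2 3 (by decide)) (cfg.hcross 1 3 (by decide))
      (cfg.hcross 1 2 (by decide)) (cfg.hcross 3 2 (by decide))
  · -- b1 : neither
    have hH20 : G.Adj (tt 2) (tt 0) := by
      obtain ⟨i, hi⟩ := cfg.covt (tt 2)
      fin_cases i
      · exact hi
      · exact absurd hi.symm nH12
      · exact absurd hi G.irrefl
      · exact absurd hi hH23
    have hH30 : G.Adj (tt 3) (tt 0) := by
      obtain ⟨i, hi⟩ := cfg.covt (tt 3)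
      fin_cases i
      · exact hi
      · exact absurd hi.symm nH13
      · exact absurd hi.symm hH23
      · exact absurd hi G.irrefl
    have hK21 : G.Adj (vv 2) (vv 1) := by
      obtain ⟨i, hi⟩ := cfg.covv (vv 2)
      fin_cases i
      · exact absurd hi.symm nK02
      · exact hi
      · exact absurd hi G.irrefl
      · exact absurd hi hK23
    have hK31 : G.Adj (vv 3) (vv 1) := by
      obtain ⟨i, hi⟩ := cfg.covv (vv 3)
      fin_cases i
      · exact absurd hi.symm nK03
      · exact hi
      · exact absurd hi.symm hK23
      · exact absurd hi G.irrefl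
    -- induced C6 : v2 v1 v3 t3 t0 t2
    have e14 : vv 2 ≠ tt 3 := fun he => cfg.hcross 2 0 (by decide) (by rw [he]; exact hH30)
    have e15 : vv 2 ≠ tt 0 := fun he => cfg.hcross 2 3 (by decide) (by rw [he]; exact hH30.symm)
    have e24 : vv 1 ≠ tt 3 := fun he => cfg.hcross 1 0 (by decide) (by rw [he]; exact hH30)
    have e25 : vv 1 ≠ tt 0 := fun he => cfg.hcross 1 2 (by decide) (by rw [he]; exact hH20.symm)
    have e26 : vv 1 ≠ tt 2 := fun he => cfg.hcross 1 0 (by decide) (by rw [he]; exact hH20)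
    have e35 : vv 3 ≠ tt 0 := fun he => cfg.hcross 3 2 (by decide) (by rw [he]; exact hH20.symm)
    have e36 : vv 3 ≠ tt 2 := fun he => cfg.hcross 3 0 (by decide) (by rw [he]; exact hH20)
    exact B.noC6 (vv 2) (vv 1) (vv 3) (tt 3) (tt 0) (tt 2)
      (cfg.hvv 2 1 (by decide)) (cfg.hvv 2 3 (by decide)) e14 e15 (cfg.hvt 2).ne
      (cfg.hvv 1 3 (by decide)) e24 e25 e26
      (cfg.hvt 3).ne e35 e36
      (cfg.htt 3 0 (by decide)) (cfg.htt 3 2 (by decide)) (cfg.htt 0 2 (by decide))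
      hK21 hK31.symm (cfg.hvt 3) hH30 hH20.symm (cfg.hvt 2).symm
      hK23 (cfg.hcross 2 3 (by decide)) (cfg.hcross 2 0 (by decide))
      (cfg.hcross 1 3 (by decide)) (cfg.hcross 1 0 (by decide)) (cfg.hcross 1 2 (by decide))
      (cfg.hcross 3 0 (by decide)) (cfg.hcross 3 2 (by decide))
      (fun h => hH23 h.symm)

/-- Dispatcher for a pair with both a `K`-edge and an `H`-edge (at indices 0,1). -/
lemma r1pre (B : Base G) (cfg : Config G vv tt)
    (hK : G.Adj (vv 0) (vv 1)) (hH : G.Adj (tt 0) (tt 1)) : False := by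
  by_cases hid : vv 0 = tt 1
  · exact r1core B cfg hid
  · by_cases hid' : tt 0 = vv 1
    · exact r1core B cfg.swap hid'
    · exact B.noC4 (vv 0) (vv 1) (tt 1) (tt 0)
        (cfg.hvv 0 1 (by decide)) hid (cfg.hvt 0).ne
        (cfg.hvt 1).ne (fun he => hid' he.symm) (cfg.htt 1 0 (by decide))
        hK (cfg.hvt 1) hH.symm (cfg.hvt 0).symm
        (cfg.hcross 0 1 (by decide)) (cfg.hcross 1 0 (by decide))

/-- The no-identification case: `K` and `H` edge-disjoint, with a path `v0 - v1 - v2` in `K`. -/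
lemma r0core (B : Base G) (cfg : Config G vv tt)
    (hdisj : ∀ i j : Fin 4, i ≠ j → ¬ (G.Adj (vv i) (vv j) ∧ G.Adj (tt i) (tt j)))
    (hK01 : G.Adj (vv 0) (vv 1)) (hK12 : G.Adj (vv 1) (vv 2)) : False := by
  have noident : ∀ i j : Fin 4, i ≠ j → vv i ≠ tt j := by
    intro i j h he
    refine hdisj i j h ⟨?_, ?_⟩
    · have := cfg.hvt j
      rw [← he] at this
      exact this.symm
    · have := cfg.hvt i
      rw [he] at this
      exact this.symm
  by_cases hH02 : G.Adj (tt 0) (tt 2)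
  · exact B.noC5 (vv 0) (vv 1) (vv 2) (tt 2) (tt 0)
      (cfg.hvv 0 1 (by decide)) (cfg.hvv 0 2 (by decide)) (noident 0 2 (by decide))
      (cfg.hvt 0).ne (cfg.hvv 1 2 (by decide)) (noident 1 2 (by decide))
      (noident 1 0 (by decide)) (cfg.hvt 2).ne (noident 2 0 (by decide))
      (cfg.htt 2 0 (by decide))
      hK01 hK12 (cfg.hvt 2) hH02.symm (cfg.hvt 0).symm
      (fun h => hdisj 0 2 (by decide) ⟨h, hH02⟩) (cfg.hcross 0 2 (by decide))
      (cfg.hcross 1 2 (by decide)) (cfg.hcross 1 0 (by decide)) (cfg.hcross 2 0 (by decide))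
  · have hH23 : G.Adj (tt 2) (tt 3) := by
      obtain ⟨i, hi⟩ := cfg.covt (tt 2)
      fin_cases i
      · exact absurd hi.symm hH02
      · exact absurd ⟨hK12, hi.symm⟩ (hdisj 1 2 (by decide))
      · exact absurd hi G.irrefl
      · exact hi
    have hH03 : G.Adj (tt 0) (tt 3) := by
      obtain ⟨i, hi⟩ := cfg.covt (tt 0)
      fin_cases i
      · exact absurd hi G.irrefl
      · exact absurd ⟨hK01, hi⟩ (hdisj 0 1 (by decide))
      · exact absurd hi hH02
      · exact hi
    by_cases hK02 : G.Adj (vv 0) (vv 2)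
    · exact B.noC5 (vv 0) (tt 0) (tt 3) (tt 2) (vv 2)
        (cfg.hvt 0).ne (noident 0 3 (by decide)) (noident 0 2 (by decide))
        (cfg.hvv 0 2 (by decide)) (cfg.htt 0 3 (by decide)) (cfg.htt 0 2 (by decide))
        (noident 2 0 (by decide)).symm (cfg.htt 3 2 (by decide))
        (noident 2 3 (by decide)).symm (cfg.hvt 2).ne.symm
        (cfg.hvt 0) hH03 hH23.symm (cfg.hvt 2).symm hK02.symm
        (cfg.hcross 0 3 (by decide)) (cfg.hcross 0 2 (by decide)) hH02
        (fun h => cfg.hcross 2 0 (by decide) h.symm) (fun h => cfg.hcross 2 3 (by decide) h.symm)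
    · exact B.noC6 (vv 0) (vv 1) (vv 2) (tt 2) (tt 3) (tt 0)
        (cfg.hvv 0 1 (by decide)) (cfg.hvv 0 2 (by decide)) (noident 0 2 (by decide))
        (noident 0 3 (by decide)) (cfg.hvt 0).ne (cfg.hvv 1 2 (by decide))
        (noident 1 2 (by decide)) (noident 1 3 (by decide)) (noident 1 0 (by decide))
        (cfg.hvt 2).ne (noident 2 3 (by decide)) (noident 2 0 (by decide))
        (cfg.htt 2 3 (by decide)) (cfg.htt 2 0 (by decide)) (cfg.htt 3 0 (by decide))
        hK01 hK12 (cfg.hvt 2) hH23 hH03.symm (cfg.hvt 0).symm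
        hK02 (cfg.hcross 0 2 (by decide)) (cfg.hcross 0 3 (by decide))
        (cfg.hcross 1 2 (by decide)) (cfg.hcross 1 3 (by decide)) (cfg.hcross 1 0 (by decide))
        (cfg.hcross 2 3 (by decide)) (cfg.hcross 2 0 (by decide))
        (fun h => hH02 h.symm)

/-- K-structure dispatcher, assuming `v0 ~ v1`. -/
lemma master2 (B : Base G) (cfg : Config G vv tt)
    (hdisj : ∀ i j : Fin 4, i ≠ j → ¬ (G.Adj (vv i) (vv j) ∧ G.Adj (tt i) (tt j)))
    (hK01 : G.Adj (vv 0) (vv 1)) : False := by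
  have permdisj : ∀ (σ : Equiv.Perm (Fin 4)),
      ∀ i j : Fin 4, i ≠ j → ¬ (G.Adj ((vv ∘ σ) i) ((vv ∘ σ) j) ∧ G.Adj ((tt ∘ σ) i) ((tt ∘ σ) j)) :=
    fun σ i j h => hdisj (σ i) (σ j) (fun e => h (σ.injective e))
  obtain ⟨i, h2⟩ := cfg.covv (vv 2)
  fin_cases i
  · -- v2 ~ v0 : star at v0
    exact r0core B (cfg.perm ⟨![1,0,2,3], ![1,0,2,3], by decide, by decide⟩)
      (permdisj _) hK01.symm h2.symm
  · -- v2 ~ v1 : star at v1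
    exact r0core B cfg hdisj hK01 h2.symm
  · exact absurd h2 G.irrefl
  · -- v2 ~ v3
    by_cases hK02 : G.Adj (vv 0) (vv 2)
    · exact r0core B (cfg.perm ⟨![1,0,2,3], ![1,0,2,3], by decide, by decide⟩)
        (permdisj _) hK01.symm hK02
    · by_cases hK03 : G.Adj (vv 0) (vv 3)
      · exact r0core B (cfg.perm ⟨![1,0,3,2], ![1,0,3,2], by decide, by decide⟩)
          (permdisj _) hK01.symm hK03
      · by_cases hK12 : G.Adj (vv 1) (vv 2)
        · exact r0core B cfg hdisj hK01 hK12
        · by_cases hK13 : G.Adj (vv 1) (vv 3)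
          · exact r0core B (cfg.perm ⟨![0,1,3,2], ![0,1,3,2], by decide, by decide⟩)
              (permdisj _) hK01 hK13
          · exact match_core B (vv 0) (vv 1) (vv 2) (vv 3)
              (cfg.hvv 0 1 (by decide)) (cfg.hvv 0 2 (by decide)) (cfg.hvv 0 3 (by decide))
              (cfg.hvv 1 2 (by decide)) (cfg.hvv 1 3 (by decide)) (cfg.hvv 2 3 (by decide))
              hK01 h2 hK02 hK03 hK12 hK13 cfg.covvOr

/-- Full dispatcher over a configuration. -/
lemma masterConfig (B : Base G) (cfg : Config G vv tt) : False := by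
  by_cases h01 : G.Adj (vv 0) (vv 1) ∧ G.Adj (tt 0) (tt 1)
  · exact r1pre B cfg h01.1 h01.2
  by_cases h02 : G.Adj (vv 0) (vv 2) ∧ G.Adj (tt 0) (tt 2)
  · exact r1pre B (cfg.perm ⟨![0,2,1,3], ![0,2,1,3], by decide, by decide⟩) h02.1 h02.2
  by_cases h03 : G.Adj (vv 0) (vv 3) ∧ G.Adj (tt 0) (tt 3)
  · exact r1pre B (cfg.perm ⟨![0,3,2,1], ![0,3,2,1], by decide, by decide⟩) h03.1 h03.2
  by_cases h12 : G.Adj (vv 1) (vv 2) ∧ G.Adj (tt 1) (tt 2)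
  · exact r1pre B (cfg.perm ⟨![1,2,0,3], ![2,0,1,3], by decide, by decide⟩) h12.1 h12.2
  by_cases h13 : G.Adj (vv 1) (vv 3) ∧ G.Adj (tt 1) (tt 3)
  · exact r1pre B (cfg.perm ⟨![1,3,0,2], ![2,0,3,1], by decide, by decide⟩) h13.1 h13.2
  by_cases h23 : G.Adj (vv 2) (vv 3) ∧ G.Adj (tt 2) (tt 3)
  · exact r1pre B (cfg.perm ⟨![2,3,0,1], ![2,3,0,1], by decide, by decide⟩) h23.1 h23.2
  have hdisj : ∀ i j : Fin 4, i ≠ j → ¬ (G.Adj (vv i) (vv j) ∧ G.Adj (tt i) (tt j)) := by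
    intro i j hne h
    fin_cases i <;> fin_cases j <;>
      first
        | exact absurd rfl hne
        | exact h01 h | exact h01 ⟨h.1.symm, h.2.symm⟩
        | exact h02 h | exact h02 ⟨h.1.symm, h.2.symm⟩
        | exact h03 h | exact h03 ⟨h.1.symm, h.2.symm⟩
        | exact h12 h | exact h12 ⟨h.1.symm, h.2.symm⟩
        | exact h13 h | exact h13 ⟨h.1.symm, h.2.symm⟩
        | exact h23 h | exact h23 ⟨h.1.symm, h.2.symm⟩
  have permdisj : ∀ (σ : Equiv.Perm (Fin 4)),
      ∀ i j : Fin 4, i ≠ j → ¬ (G.Adj ((vv ∘ σ) i) ((vv ∘ σ) j) ∧ G.Adj ((tt ∘ σ) i) ((tt ∘ σ) j)) :=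
    fun σ i j h => hdisj (σ i) (σ j) (fun e => h (σ.injective e))
  obtain ⟨i, h0⟩ := cfg.covv (vv 0)
  fin_cases i
  · exact absurd h0 G.irrefl
  · exact master2 B cfg hdisj h0
  · exact master2 B (cfg.perm ⟨![0,2,1,3], ![0,2,1,3], by decide, by decide⟩) (permdisj _) h0
  · exact master2 B (cfg.perm ⟨![0,3,2,1], ![0,3,2,1], by decide, by decide⟩) (permdisj _) h0

end RParts

lemma noC4_of (hch : Chordal G) (a b c d : V)
    (h1 : a ≠ b) (h2 : a ≠ c) (h3 : a ≠ d) (h4 : b ≠ c) (h5 : b ≠ d) (h6 : c ≠ d)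
    (e1 : G.Adj a b) (e2 : G.Adj b c) (e3 : G.Adj c d) (e4 : G.Adj d a)
    (n1 : ¬ G.Adj a c) (n2 : ¬ G.Adj b d) : False := by
  have e1' := e1.symm; have e2' := e2.symm; have e3' := e3.symm; have e4' := e4.symm
  have n1' : ¬ G.Adj c a := fun h => n1 h.symm
  have n2' : ¬ G.Adj d b := fun h => n2 h.symm
  have i1 : ¬ G.Adj a a := G.irrefl
  have i2 : ¬ G.Adj b b := G.irrefl
  have i3 : ¬ G.Adj c c := G.irrefl
  have i4 : ¬ G.Adj d d := G.irrefl
  refine (hch 4 (by norm_num)).false ⟨⟨![a,b,c,d], ?_⟩, ?_⟩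
  · intro i j hij
    fin_cases i <;> fin_cases j <;>
      first
        | rfl
        | exact absurd hij (by assumption)
        | exact absurd hij.symm (by assumption)
  · intro i j
    fin_cases i <;> fin_cases j <;>
      simp only [Matrix.cons_val_zero, Matrix.cons_val_one, Matrix.head_cons,
        Matrix.cons_val_two, Matrix.tail_cons, Matrix.cons_val_three, Matrix.head_fin_const,
        Function.Embedding.coeFn_mk] <;>
      first
        | exact iff_of_true (by assumption) (by decide)
        | exact iff_of_false (by assumption) (by decide)

lemma noC5_of (hch : Chordal G) (a b c d e : V)
    (d1 : a ≠ b) (d2 : a ≠ c) (d3 : a ≠ d) (d4 : a ≠ e) (d5 : b ≠ c) (d6 : b ≠ d)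
    (d7 : b ≠ e) (d8 : c ≠ d) (d9 : c ≠ e) (d10 : d ≠ e)
    (e1 : G.Adj a b) (e2 : G.Adj b c) (e3 : G.Adj c d) (e4 : G.Adj d e) (e5 : G.Adj e a)
    (n1 : ¬ G.Adj a c) (n2 : ¬ G.Adj a d) (n3 : ¬ G.Adj b d) (n4 : ¬ G.Adj b e)
    (n5 : ¬ G.Adj c e) : False := by
  have e1' := e1.symm; have e2' := e2.symm; have e3' := e3.symm; have e4' := e4.symm
  have e5' := e5.symm
  have n1' : ¬ G.Adj c a := fun h => n1 h.symm
  have n2' : ¬ G.Adj d a := fun h => n2 h.symm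
  have n3' : ¬ G.Adj d b := fun h => n3 h.symm
  have n4' : ¬ G.Adj e b := fun h => n4 h.symm
  have n5' : ¬ G.Adj e c := fun h => n5 h.symm
  have i1 : ¬ G.Adj a a := G.irrefl
  have i2 : ¬ G.Adj b b := G.irrefl
  have i3 : ¬ G.Adj c c := G.irrefl
  have i4 : ¬ G.Adj d d := G.irrefl
  have i5 : ¬ G.Adj e e := G.irrefl
  refine (hch 5 (by norm_num)).false ⟨⟨![a,b,c,d,e], ?_⟩, ?_⟩
  · intro i j hij
    fin_cases i <;> fin_cases j <;>
      first
        | rfl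
        | exact absurd hij (by assumption)
        | exact absurd hij.symm (by assumption)
  · intro i j
    fin_cases i <;> fin_cases j <;>
      first
        | exact iff_of_true (by assumption) (by decide)
        | exact iff_of_false (by assumption) (by decide)

set_option maxHeartbeats 1000000 in
lemma noC6_of (hch : Chordal G) (a b c d e f : V)
    (d1 : a ≠ b) (d2 : a ≠ c) (d3 : a ≠ d) (d4 : a ≠ e) (d5 : a ≠ f) (d6 : b ≠ c)
    (d7 : b ≠ d) (d8 : b ≠ e) (d9 : b ≠ f) (d10 : c ≠ d) (d11 : c ≠ e) (d12 : c ≠ f)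
    (d13 : d ≠ e) (d14 : d ≠ f) (d15 : e ≠ f)
    (e1 : G.Adj a b) (e2 : G.Adj b c) (e3 : G.Adj c d) (e4 : G.Adj d e) (e5 : G.Adj e f)
    (e6 : G.Adj f a)
    (n1 : ¬ G.Adj a c) (n2 : ¬ G.Adj a d) (n3 : ¬ G.Adj a e) (n4 : ¬ G.Adj b d)
    (n5 : ¬ G.Adj b e) (n6 : ¬ G.Adj b f) (n7 : ¬ G.Adj c e) (n8 : ¬ G.Adj c f)
    (n9 : ¬ G.Adj d f) : False := by
  have e1' := e1.symm; have e2' := e2.symm; have e3' := e3.symm; have e4' := e4.symm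
  have e5' := e5.symm; have e6' := e6.symm
  have n1' : ¬ G.Adj c a := fun h => n1 h.symm
  have n2' : ¬ G.Adj d a := fun h => n2 h.symm
  have n3' : ¬ G.Adj e a := fun h => n3 h.symm
  have n4' : ¬ G.Adj d b := fun h => n4 h.symm
  have n5' : ¬ G.Adj e b := fun h => n5 h.symm
  have n6' : ¬ G.Adj f b := fun h => n6 h.symm
  have n7' : ¬ G.Adj e c := fun h => n7 h.symm
  have n8' : ¬ G.Adj f c := fun h => n8 h.symm
  have n9' : ¬ G.Adj f d := fun h => n9 h.symm
  have i1 : ¬ G.Adj a a := G.irrefl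
  have i2 : ¬ G.Adj b b := G.irrefl
  have i3 : ¬ G.Adj c c := G.irrefl
  have i4 : ¬ G.Adj d d := G.irrefl
  have i5 : ¬ G.Adj e e := G.irrefl
  have i6 : ¬ G.Adj f f := G.irrefl
  refine (hch 6 (by norm_num)).false ⟨⟨![a,b,c,d,e,f], ?_⟩, ?_⟩
  · intro i j hij
    fin_cases i <;> fin_cases j <;>
      first
        | rfl
        | exact absurd hij (by assumption)
        | exact absurd hij.symm (by assumption)
  · intro i j
    fin_cases i <;> fin_cases j <;>
      first
        | exact iff_of_true (by assumption) (by decide)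
        | exact iff_of_false (by assumption) (by decide)

section Setup

variable [Fintype V]

lemma setup_min (htd : totalDomNum G = 4) :
    (∀ S : Set V, IsTotalDomSet G S → 4 ≤ S.ncard) ∧ (∀ v : V, ∃ u, G.Adj v u) := by
  have hne : {k : ℕ | ∃ S : Set V, IsTotalDomSet G S ∧ S.ncard = k}.Nonempty := by
    by_contra h
    rw [Set.not_nonempty_iff_eq_empty] at h
    rw [totalDomNum, h, Nat.sInf_empty] at htd
    omega
  constructor
  · intro S hS
    have : totalDomNum G ≤ S.ncard := Nat.sInf_le ⟨S, hS, rfl⟩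
    omega
  · obtain ⟨S0, hS0, _⟩ := Nat.sInf_mem hne
    exact fun v => by obtain ⟨u, _, h⟩ := hS0 v; exact ⟨u, h⟩

lemma setup_c2 (hmin : ∀ S : Set V, IsTotalDomSet G S → 4 ≤ S.ncard) :
    ∀ a b c : V, ∃ z : V, ¬ G.Adj z a ∧ ¬ G.Adj z b ∧ ¬ G.Adj z c := by
  intro a b c
  by_contra h
  push_neg at h
  have hS : IsTotalDomSet G {a, b, c} := by
    intro v
    rcases Classical.em (G.Adj v a) with hv | hv
    · exact ⟨a, by simp, hv⟩
    · rcases Classical.em (G.Adj v b) with hv2 | hv2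
      · exact ⟨b, by simp, hv2⟩
      · exact ⟨c, by simp, h v hv hv2⟩
  have h4 := hmin _ hS
  have h3 : ({a, b, c} : Set V).ncard ≤ 3 := by
    apply le_trans (Set.ncard_insert_le _ _)
    have : ({b, c} : Set V).ncard ≤ 2 := by
      apply le_trans (Set.ncard_insert_le _ _)
      simp [Set.ncard_singleton]
    omega
  omega

lemma setup_grundy (hgr : grundyTotalDomNum G = 4) :
    (∀ l' : List V, IsTotalDomSeq G l' → l'.length ≤ 4) ∧
    (∃ l : List V, IsTotalDomSeq G l ∧ l.length = 4) := by
  set L := {k : ℕ | ∃ l : List V, IsTotalDomSeq G l ∧ l.length = k} with hL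
  have hbdd : BddAbove L := by
    refine ⟨Fintype.card V, fun k hk => ?_⟩
    obtain ⟨l, hl, he⟩ := hk
    exact he ▸ hl.1.1.length_le_card
  have hne : L.Nonempty := by
    by_contra h
    rw [Set.not_nonempty_iff_eq_empty] at h
    rw [grundyTotalDomNum, ← hL, h] at hgr
    rw [csSup_empty] at hgr
    simp at hgr
  constructor
  · intro l' hl'
    have : l'.length ≤ sSup L := le_csSup hbdd ⟨l', hl', rfl⟩
    rw [grundyTotalDomNum] at hgr
    rw [← hL] at hgr
    omega
  · have h4 : 4 ∈ L := by
      have := Nat.sSup_mem hne hbdd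
      rw [grundyTotalDomNum] at hgr
      rw [← hL] at hgr
      rwa [hgr] at this
    exact h4

lemma setup_cov4 (hNoIso : ∀ v : V, ∃ u, G.Adj v u)
    (hle4 : ∀ l' : List V, IsTotalDomSeq G l' → l'.length ≤ 4) :
    ∀ a b c d : V, a ≠ b → a ≠ c → a ≠ d → b ≠ c → b ≠ d → c ≠ d →
    (∃ w, G.Adj b w ∧ ¬ G.Adj a w) →
    (∃ w, G.Adj c w ∧ ¬ G.Adj a w ∧ ¬ G.Adj b w) →
    (∃ w, G.Adj d w ∧ ¬ G.Adj a w ∧ ¬ G.Adj b w ∧ ¬ G.Adj c w) →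
    ∀ u : V, G.Adj u a ∨ G.Adj u b ∨ G.Adj u c ∨ G.Adj u d := by
  intro a b c d h1 h2 h3 h4 h5 h6 w2 w3 w4 u
  by_contra hcon
  push_neg at hcon
  obtain ⟨n1, n2, n3, n4⟩ := hcon
  obtain ⟨e, he⟩ := hNoIso u
  have hea : e ≠ a := fun hh => n1 (hh ▸ he)
  have heb : e ≠ b := fun hh => n2 (hh ▸ he)
  have hec : e ≠ c := fun hh => n3 (hh ▸ he)
  have hed : e ≠ d := fun hh => n4 (hh ▸ he)
  obtain ⟨wb, hwb1, hwb2⟩ := w2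
  obtain ⟨wc, hwc1, hwc2, hwc3⟩ := w3
  obtain ⟨wd, hwd1, hwd2, hwd3, hwd4⟩ := w4
  have hq : QSeq G [e, d, c, b, a] := by
    refine ⟨⟨⟨⟨⟨trivial, Or.inl rfl⟩, Or.inr ⟨wb, hwb1, ?_⟩⟩, Or.inr ⟨wc, hwc1, ?_⟩⟩,
      Or.inr ⟨wd, hwd1, ?_⟩⟩, Or.inr ⟨u, he.symm, ?_⟩⟩
    · intro x hx
      simp only [List.mem_cons, List.not_mem_nil, or_false] at hx
      subst hx; exact hwb2
    · intro x hx
      simp only [List.mem_cons, List.not_mem_nil, or_false] at hx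
      rcases hx with rfl | rfl
      exacts [hwc3, hwc2]
    · intro x hx
      simp only [List.mem_cons, List.not_mem_nil, or_false] at hx
      rcases hx with rfl | rfl | rfl
      exacts [hwd4, hwd3, hwd2]
    · intro x hx
      simp only [List.mem_cons, List.not_mem_nil, or_false] at hx
      rcases hx with rfl | rfl | rfl | rfl
      · exact fun h => n4 h.symm
      · exact fun h => n3 h.symm
      · exact fun h => n2 h.symm
      · exact fun h => n1 h.symm
  have hnd : ([e, d, c, b, a] : List V).Nodup := by
    simp only [List.nodup_cons, List.mem_cons, List.not_mem_nil, or_false,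
      not_false_iff, List.nodup_nil, and_true]
    refine ⟨?_, ?_, ?_, ?_⟩
    · push_neg
      exact ⟨hed, hec, heb, hea⟩
    · push_neg
      exact ⟨h6.symm, h5.symm, h3.symm⟩
    · push_neg
      exact ⟨h4.symm, h2.symm⟩
    · exact h1.symm
  have := no_q5 hNoIso hle4 _ hnd hq
  simp at this

end Setup

end Work

/-- There is no connected chordal graph `G` with
`γ_t(G) = 4` and `γ_gr^t(G) = 4`. -/
theorem no_connected_chordal_with_total_dom_eq_grundy_eq_four :
    ¬ ∃ (V : Type) (_ : Fintype V) (G : SimpleGraph V),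
        G.Connected ∧ Chordal G ∧ totalDomNum G = 4 ∧ grundyTotalDomNum G = 4 := by
  rintro ⟨V, fV, G, hconn, hch, htd, hgr⟩
  letI := fV
  classical
  obtain ⟨hmin, hNoIso⟩ := Work.setup_min htd
  have c2 := Work.setup_c2 hmin
  obtain ⟨hle4, l, hl, hlen⟩ := Work.setup_grundy hgr
  have cov4 := Work.setup_cov4 hNoIso hle4
  have B : Work.Base G :=
    ⟨c2, cov4, fun u w => hconn.preconnected u w,
      Work.noC4_of hch, Work.noC5_of hch, Work.noC6_of hch⟩
  obtain ⟨a, b, c, d, rfl⟩ : ∃ a b c d, l = [a, b, c, d] := by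
    rcases l with _ | ⟨a, _ | ⟨b, _ | ⟨c, _ | ⟨d, _ | ⟨e, t⟩⟩⟩⟩⟩
    · simp at hlen
    · simp at hlen
    · simp at hlen
    · simp at hlen
    · exact ⟨a, b, c, d, rfl⟩
    · simp at hlen
  obtain ⟨hnd, hlegal⟩ := hl.1
  have hnd' : (¬a = b ∧ ¬a = c ∧ ¬a = d) ∧ (¬b = c ∧ ¬b = d) ∧ ¬c = d := by
    simpa using hnd
  obtain ⟨⟨dab0, dac0, dad0⟩, ⟨dbc0, dbd0⟩, dcd0⟩ := hnd'
  have dab : a ≠ b := dab0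
  have dac : a ≠ c := dac0
  have dad : a ≠ d := dad0
  have dbc : b ≠ c := dbc0
  have dbd : b ≠ d := dbd0
  have dcd : c ≠ d := dcd0
  -- extract the legality witnesses
  obtain ⟨w2, hw2, hj2⟩ := hlegal ⟨1, by norm_num⟩ (by norm_num)
  obtain ⟨w3, hw3, hj3⟩ := hlegal ⟨2, by norm_num⟩ (by norm_num)
  obtain ⟨w4, hw4, hj4⟩ := hlegal ⟨3, by norm_num⟩ (by norm_num)
  have hw2b : G.Adj b w2 := by simpa using hw2
  have hw2a : ¬ G.Adj a w2 := by simpa using hj2 ⟨0, by norm_num⟩ (by norm_num)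
  have hw3c : G.Adj c w3 := by simpa using hw3
  have hw3a : ¬ G.Adj a w3 := by simpa using hj3 ⟨0, by norm_num⟩ (by norm_num)
  have hw3b : ¬ G.Adj b w3 := by simpa using hj3 ⟨1, by norm_num⟩ (by norm_num)
  have hw4d : G.Adj d w4 := by simpa using hw4
  have hw4a : ¬ G.Adj a w4 := by simpa using hj4 ⟨0, by norm_num⟩ (by norm_num)
  have hw4b : ¬ G.Adj b w4 := by simpa using hj4 ⟨1, by norm_num⟩ (by norm_num)
  have hw4c : ¬ G.Adj c w4 := by simpa using hj4 ⟨2, by norm_num⟩ (by norm_num)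
  have cov : ∀ u : V, G.Adj u a ∨ G.Adj u b ∨ G.Adj u c ∨ G.Adj u d :=
    cov4 a b c d dab dac dad dbc dbd dcd ⟨w2, hw2b, hw2a⟩ ⟨w3, hw3c, hw3a, hw3b⟩
      ⟨w4, hw4d, hw4a, hw4b, hw4c⟩
  -- the private vertices
  obtain ⟨t0, ht0b, ht0c, ht0d⟩ := c2 b c d
  have ht0a : G.Adj t0 a := by
    rcases cov t0 with h | h | h | h
    exacts [h, absurd h ht0b, absurd h ht0c, absurd h ht0d]
  obtain ⟨t1, ht1a, ht1c, ht1d⟩ := c2 a c d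
  have ht1b : G.Adj t1 b := by
    rcases cov t1 with h | h | h | h
    exacts [absurd h ht1a, h, absurd h ht1c, absurd h ht1d]
  obtain ⟨t2, ht2a, ht2b, ht2d⟩ := c2 a b d
  have ht2c : G.Adj t2 c := by
    rcases cov t2 with h | h | h | h
    exacts [absurd h ht2a, absurd h ht2b, h, absurd h ht2d]
  obtain ⟨t3, ht3a, ht3b, ht3c⟩ := c2 a b c
  have ht3d : G.Adj t3 d := by
    rcases cov t3 with h | h | h | h
    exacts [absurd h ht3a, absurd h ht3b, absurd h ht3c, h]
  -- distinctness of the t's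
  have dt01 : t0 ≠ t1 := Work.neAN ht0a ht1a
  have dt02 : t0 ≠ t2 := Work.neAN ht0a ht2a
  have dt03 : t0 ≠ t3 := Work.neAN ht0a ht3a
  have dt12 : t1 ≠ t2 := Work.neAN ht1b ht2b
  have dt13 : t1 ≠ t3 := Work.neAN ht1b ht3b
  have dt23 : t2 ≠ t3 := Work.neAN ht2c ht3c
  -- t-cover
  have covt : ∀ u : V, G.Adj u t0 ∨ G.Adj u t1 ∨ G.Adj u t2 ∨ G.Adj u t3 :=
    cov4 t0 t1 t2 t3 dt01 dt02 dt03 dt12 dt13 dt23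
      ⟨b, ht1b, ht0b⟩ ⟨c, ht2c, ht0c, ht1c⟩ ⟨d, ht3d, ht0d, ht1d, ht2d⟩
  -- cross non-adjacency facts, oriented (vv i, tt j)
  have nat1 : ¬ G.Adj a t1 := Work.nsymm ht1a
  have nat2 : ¬ G.Adj a t2 := Work.nsymm ht2a
  have nat3 : ¬ G.Adj a t3 := Work.nsymm ht3a
  have nbt0 : ¬ G.Adj b t0 := Work.nsymm ht0b
  have nbt2 : ¬ G.Adj b t2 := Work.nsymm ht2b
  have nbt3 : ¬ G.Adj b t3 := Work.nsymm ht3b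
  have nct0 : ¬ G.Adj c t0 := Work.nsymm ht0c
  have nct1 : ¬ G.Adj c t1 := Work.nsymm ht1c
  have nct3 : ¬ G.Adj c t3 := Work.nsymm ht3c
  have ndt0 : ¬ G.Adj d t0 := Work.nsymm ht0d
  have ndt1 : ¬ G.Adj d t1 := Work.nsymm ht1d
  have ndt2 : ¬ G.Adj d t2 := Work.nsymm ht2d
  have dba : b ≠ a := dab.symm
  have dca : c ≠ a := dac.symm
  have dda : d ≠ a := dad.symm
  have dcb : c ≠ b := dbc.symm
  have ddb : d ≠ b := dbd.symm
  have ddc : d ≠ c := dcd.symm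
  have dt10 : t1 ≠ t0 := dt01.symm
  have dt20 : t2 ≠ t0 := dt02.symm
  have dt30 : t3 ≠ t0 := dt03.symm
  have dt21 : t2 ≠ t1 := dt12.symm
  have dt31 : t3 ≠ t1 := dt13.symm
  have dt32 : t3 ≠ t2 := dt23.symm
  have hvta : G.Adj a t0 := ht0a.symm
  have hvtb : G.Adj b t1 := ht1b.symm
  have hvtc : G.Adj c t2 := ht2c.symm
  have hvtd : G.Adj d t3 := ht3d.symm
  have cfg : Work.Config G ![a, b, c, d] ![t0, t1, t2, t3] := by
    refine ⟨?_, ?_, ?_, ?_, ?_, ?_⟩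
    · intro i
      fin_cases i <;> assumption
    · intro i j hij
      fin_cases i <;> fin_cases j <;> first | exact absurd rfl hij | assumption
    · intro i j hij
      fin_cases i <;> fin_cases j <;> first | exact absurd rfl hij | assumption
    · intro i j hij
      fin_cases i <;> fin_cases j <;> first | exact absurd rfl hij | assumption
    · intro z
      rcases cov z with h | h | h | h
      exacts [⟨0, h⟩, ⟨1, h⟩, ⟨2, h⟩, ⟨3, h⟩]
    · intro z
      rcases covt z with h | h | h | h
      exacts [⟨0, h⟩, ⟨1, h⟩, ⟨2, h⟩, ⟨3, h⟩]
  exact Work.masterConfig B cfg
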